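/- arXiv:2511.01922 — 3 statements merged into one kernel-verified Lean document; each statement's English description precedes it below -/
import Mathlib

section
/- For a > 1 and b < 0, the second derivative of the Melnikov function satisfies M″(h) < 0 for every h ≥ (a² - 1)/2. -/
open Real

noncomputable def Mel (a b h : ℝ) : ℝ :=
  -(Real.pi / 4) * (a + 1) ^ 2 * (5 * a ^ 2 + 10 * a + 4 * b + 5)
    - (15 * a ^ 2 + 4 * b + 5) * Real.sqrt h / Real.sqrt 2
    - (3 * a ^ 2 + 6 * a + 2 * b + 3) * Real.pi * h
    - (13 * Real.sqrt 2 / 3) * (h * Real.sqrt h)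
    - Real.pi * h ^ 2
    - (1 / 4) * (a ^ 2 - 2 * a + 2 * h + 1) * (5 * a ^ 2 - 10 * a + 4 * b + 2 * h + 5)
        * Real.arctan (Real.sqrt (2 * h) / (a - 1))
    + (1 / 4) * (a ^ 2 + 2 * a + 2 * h + 1) * (5 * a ^ 2 + 10 * a + 4 * b + 2 * h + 5)
        * Real.arctan (Real.sqrt (2 * h) / (a + 1))

lemma sqrt2h_hasDeriv {h : ℝ} (hh : 0 < h) :
    HasDerivAt (fun x : ℝ => Real.sqrt (2 * x)) (1 / Real.sqrt (2 * h)) h := by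
  have h1 : HasDerivAt (fun x : ℝ => 2 * x) 2 h := by
    simpa using (hasDerivAt_id h).const_mul (2 : ℝ)
  have h2 := (Real.hasDerivAt_sqrt (by positivity : 2 * h ≠ 0)).comp h h1
  have hs : (0:ℝ) < Real.sqrt (2 * h) := Real.sqrt_pos.mpr (by linarith)
  refine h2.congr_deriv (Eq.symm ?_)
  field_simp

lemma atan_hasDeriv {c h : ℝ} (hc : 0 < c) (hh : 0 < h) :
    HasDerivAt (fun x : ℝ => Real.arctan (Real.sqrt (2 * x) / c))
      (c / ((c ^ 2 + 2 * h) * Real.sqrt (2 * h))) h := by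
  have h1 : HasDerivAt (fun x : ℝ => Real.sqrt (2 * x) / c)
      ((1 / Real.sqrt (2 * h)) / c) h := (sqrt2h_hasDeriv hh).div_const c
  have h2 := (Real.hasDerivAt_arctan (Real.sqrt (2 * h) / c)).comp h h1
  refine h2.congr_deriv (Eq.symm ?_)
  have hs : (0:ℝ) < Real.sqrt (2 * h) := Real.sqrt_pos.mpr (by linarith)
  have hs2 : Real.sqrt (2 * h) ^ 2 = 2 * h := Real.sq_sqrt (by linarith)
  set s := Real.sqrt (2 * h) with hsdef
  rw [← hs2]
  field_simp
  try ring

/-- `Mel` rewritten in terms of `√(2x)` only. -/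
noncomputable def Mel' (a b x : ℝ) : ℝ :=
  -(Real.pi / 4) * (a + 1) ^ 2 * (5 * a ^ 2 + 10 * a + 4 * b + 5)
    - (15 * a ^ 2 + 4 * b + 5) * (Real.sqrt (2 * x) / 2)
    - (3 * a ^ 2 + 6 * a + 2 * b + 3) * Real.pi * x
    - (13 / 3) * (x * Real.sqrt (2 * x))
    - Real.pi * x ^ 2
    - (1 / 4) * (a ^ 2 - 2 * a + 2 * x + 1) * (5 * a ^ 2 - 10 * a + 4 * b + 2 * x + 5)
        * Real.arctan (Real.sqrt (2 * x) / (a - 1))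
    + (1 / 4) * (a ^ 2 + 2 * a + 2 * x + 1) * (5 * a ^ 2 + 10 * a + 4 * b + 2 * x + 5)
        * Real.arctan (Real.sqrt (2 * x) / (a + 1))

lemma Mel_eq_Mel' (a b : ℝ) : Mel a b = Mel' a b := by
  funext x
  unfold Mel Mel'
  have e : Real.sqrt (2 * x) = Real.sqrt 2 * Real.sqrt x := Real.sqrt_mul (by norm_num) x
  have h2 : Real.sqrt 2 * Real.sqrt 2 = 2 := Real.mul_self_sqrt (by norm_num)
  have h2ne : Real.sqrt 2 ≠ 0 := by positivity
  rw [e]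
  field_simp
  ring_nf
  rw [Real.sq_sqrt (by norm_num : (0:ℝ) ≤ 2)]
  ring

/-- First derivative of Mel. -/
noncomputable def M1 (a b x : ℝ) : ℝ :=
  (-6) * Real.sqrt (2 * x) - (3 * a ^ 2 + 6 * a + 2 * b + 3) * Real.pi - 2 * Real.pi * x
    - (3 * (a - 1) ^ 2 + 2 * b + 2 * x) * Real.arctan (Real.sqrt (2 * x) / (a - 1))
    + (3 * (a + 1) ^ 2 + 2 * b + 2 * x) * Real.arctan (Real.sqrt (2 * x) / (a + 1))

lemma Mel_hasDeriv (a b : ℝ) (ha : 1 < a) {h : ℝ} (hh : 0 < h) :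
    HasDerivAt (Mel a b) (M1 a b h) h := by
  rw [Mel_eq_Mel']
  have hs : (0:ℝ) < Real.sqrt (2 * h) := Real.sqrt_pos.mpr (by linarith)
  have hs2 : Real.sqrt (2 * h) ^ 2 = 2 * h := Real.sq_sqrt (by linarith)
  have hS : HasDerivAt (fun x : ℝ => Real.sqrt (2 * x)) (1 / Real.sqrt (2 * h)) h :=
    sqrt2h_hasDeriv hh
  have hAm : HasDerivAt (fun x : ℝ => Real.arctan (Real.sqrt (2 * x) / (a - 1)))
      ((a - 1) / (((a - 1) ^ 2 + 2 * h) * Real.sqrt (2 * h))) h :=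
    atan_hasDeriv (by linarith) hh
  have hAp : HasDerivAt (fun x : ℝ => Real.arctan (Real.sqrt (2 * x) / (a + 1)))
      ((a + 1) / (((a + 1) ^ 2 + 2 * h) * Real.sqrt (2 * h))) h :=
    atan_hasDeriv (by linarith) hh
  have hPm : HasDerivAt (fun x : ℝ => a ^ 2 - 2 * a + 2 * x + 1) 2 h := by
    simpa using ((((hasDerivAt_id h).const_mul (2:ℝ)).const_add (a ^ 2 - 2 * a)).add_const 1)
  have hPp : HasDerivAt (fun x : ℝ => a ^ 2 + 2 * a + 2 * x + 1) 2 h := by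
    simpa using ((((hasDerivAt_id h).const_mul (2:ℝ)).const_add (a ^ 2 + 2 * a)).add_const 1)
  have hQm : HasDerivAt (fun x : ℝ => 5 * a ^ 2 - 10 * a + 4 * b + 2 * x + 5) 2 h := by
    simpa using ((((hasDerivAt_id h).const_mul (2:ℝ)).const_add (5 * a ^ 2 - 10 * a + 4 * b)).add_const 5)
  have hQp : HasDerivAt (fun x : ℝ => 5 * a ^ 2 + 10 * a + 4 * b + 2 * x + 5) 2 h := by
    simpa using ((((hasDerivAt_id h).const_mul (2:ℝ)).const_add (5 * a ^ 2 + 10 * a + 4 * b)).add_const 5)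
  have ht1 : HasDerivAt (fun x : ℝ => (15 * a ^ 2 + 4 * b + 5) * (Real.sqrt (2 * x) / 2))
      ((15 * a ^ 2 + 4 * b + 5) * ((1 / Real.sqrt (2 * h)) / 2)) h :=
    (hS.div_const 2).const_mul _
  have ht2 : HasDerivAt (fun x : ℝ => (3 * a ^ 2 + 6 * a + 2 * b + 3) * Real.pi * x)
      ((3 * a ^ 2 + 6 * a + 2 * b + 3) * Real.pi) h := by
    simpa using (hasDerivAt_id h).const_mul ((3 * a ^ 2 + 6 * a + 2 * b + 3) * Real.pi)
  have ht3 : HasDerivAt (fun x : ℝ => (13 / 3 : ℝ) * (x * Real.sqrt (2 * x)))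
      ((13 / 3 : ℝ) * (1 * Real.sqrt (2 * h) + h * (1 / Real.sqrt (2 * h)))) h :=
    ((hasDerivAt_id h).mul hS).const_mul _
  have ht4 : HasDerivAt (fun x : ℝ => Real.pi * x ^ 2) (Real.pi * (2 * h)) h := by
    simpa using (hasDerivAt_pow 2 h).const_mul Real.pi
  have ht5 : HasDerivAt (fun x : ℝ => (1 / 4 : ℝ) * (a ^ 2 - 2 * a + 2 * x + 1)
        * (5 * a ^ 2 - 10 * a + 4 * b + 2 * x + 5)
        * Real.arctan (Real.sqrt (2 * x) / (a - 1)))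
      ((((1 / 4 : ℝ) * 2) * (5 * a ^ 2 - 10 * a + 4 * b + 2 * h + 5)
          + ((1 / 4 : ℝ) * (a ^ 2 - 2 * a + 2 * h + 1)) * 2)
          * Real.arctan (Real.sqrt (2 * h) / (a - 1))
        + ((1 / 4 : ℝ) * (a ^ 2 - 2 * a + 2 * h + 1)) * (5 * a ^ 2 - 10 * a + 4 * b + 2 * h + 5)
          * ((a - 1) / (((a - 1) ^ 2 + 2 * h) * Real.sqrt (2 * h)))) h := by
    exact ((hPm.const_mul (1/4 : ℝ)).mul hQm).mul hAm
  have ht6 : HasDerivAt (fun x : ℝ => (1 / 4 : ℝ) * (a ^ 2 + 2 * a + 2 * x + 1)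
        * (5 * a ^ 2 + 10 * a + 4 * b + 2 * x + 5)
        * Real.arctan (Real.sqrt (2 * x) / (a + 1)))
      ((((1 / 4 : ℝ) * 2) * (5 * a ^ 2 + 10 * a + 4 * b + 2 * h + 5)
          + ((1 / 4 : ℝ) * (a ^ 2 + 2 * a + 2 * h + 1)) * 2)
          * Real.arctan (Real.sqrt (2 * h) / (a + 1))
        + ((1 / 4 : ℝ) * (a ^ 2 + 2 * a + 2 * h + 1)) * (5 * a ^ 2 + 10 * a + 4 * b + 2 * h + 5)
          * ((a + 1) / (((a + 1) ^ 2 + 2 * h) * Real.sqrt (2 * h)))) h := by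
    exact ((hPp.const_mul (1/4 : ℝ)).mul hQp).mul hAp
  have hsum := (((((hasDerivAt_const h
      (-(Real.pi / 4) * (a + 1) ^ 2 * (5 * a ^ 2 + 10 * a + 4 * b + 5))).sub ht1).sub
      ht2).sub ht3).sub ht4).sub ht5 |>.add ht6
  have heq : M1 a b h = 0 - (15 * a ^ 2 + 4 * b + 5) * ((1 / Real.sqrt (2 * h)) / 2)
      - (3 * a ^ 2 + 6 * a + 2 * b + 3) * Real.pi
      - (13 / 3 : ℝ) * (1 * Real.sqrt (2 * h) + h * (1 / Real.sqrt (2 * h)))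
      - Real.pi * (2 * h)
      - ((((1 / 4 : ℝ) * 2) * (5 * a ^ 2 - 10 * a + 4 * b + 2 * h + 5)
          + ((1 / 4 : ℝ) * (a ^ 2 - 2 * a + 2 * h + 1)) * 2)
          * Real.arctan (Real.sqrt (2 * h) / (a - 1))
        + ((1 / 4 : ℝ) * (a ^ 2 - 2 * a + 2 * h + 1)) * (5 * a ^ 2 - 10 * a + 4 * b + 2 * h + 5)
          * ((a - 1) / (((a - 1) ^ 2 + 2 * h) * Real.sqrt (2 * h))))
      + ((((1 / 4 : ℝ) * 2) * (5 * a ^ 2 + 10 * a + 4 * b + 2 * h + 5)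
          + ((1 / 4 : ℝ) * (a ^ 2 + 2 * a + 2 * h + 1)) * 2)
          * Real.arctan (Real.sqrt (2 * h) / (a + 1))
        + ((1 / 4 : ℝ) * (a ^ 2 + 2 * a + 2 * h + 1)) * (5 * a ^ 2 + 10 * a + 4 * b + 2 * h + 5)
          * ((a + 1) / (((a + 1) ^ 2 + 2 * h) * Real.sqrt (2 * h)))) := by
    unfold M1
    have hm : (a - 1) ^ 2 + 2 * h > 0 := by positivity
    have hp : (a + 1) ^ 2 + 2 * h > 0 := by positivity
    set s := Real.sqrt (2 * h) with hsdef
    have hh2 : h = s ^ 2 / 2 := by rw [hs2]; ring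
    rw [hh2]
    field_simp
    ring
  rw [heq]
  exact hsum

/-- Second derivative of Mel. -/
noncomputable def M2 (a b x : ℝ) : ℝ :=
  (-6) * (1 / Real.sqrt (2 * x)) - 2 * Real.pi
    - (2 * Real.arctan (Real.sqrt (2 * x) / (a - 1))
        + (3 * (a - 1) ^ 2 + 2 * b + 2 * x)
          * ((a - 1) / (((a - 1) ^ 2 + 2 * x) * Real.sqrt (2 * x))))
    + (2 * Real.arctan (Real.sqrt (2 * x) / (a + 1))
        + (3 * (a + 1) ^ 2 + 2 * b + 2 * x)
          * ((a + 1) / (((a + 1) ^ 2 + 2 * x) * Real.sqrt (2 * x))))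

lemma M1_hasDeriv (a b : ℝ) (ha : 1 < a) {h : ℝ} (hh : 0 < h) :
    HasDerivAt (M1 a b) (M2 a b h) h := by
  have hS : HasDerivAt (fun x : ℝ => Real.sqrt (2 * x)) (1 / Real.sqrt (2 * h)) h :=
    sqrt2h_hasDeriv hh
  have hAm : HasDerivAt (fun x : ℝ => Real.arctan (Real.sqrt (2 * x) / (a - 1)))
      ((a - 1) / (((a - 1) ^ 2 + 2 * h) * Real.sqrt (2 * h))) h :=
    atan_hasDeriv (by linarith) hh
  have hAp : HasDerivAt (fun x : ℝ => Real.arctan (Real.sqrt (2 * x) / (a + 1)))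
      ((a + 1) / (((a + 1) ^ 2 + 2 * h) * Real.sqrt (2 * h))) h :=
    atan_hasDeriv (by linarith) hh
  have hCm : HasDerivAt (fun x : ℝ => 3 * (a - 1) ^ 2 + 2 * b + 2 * x) 2 h := by
    simpa using (((hasDerivAt_id h).const_mul (2:ℝ)).const_add (3 * (a - 1) ^ 2 + 2 * b))
  have hCp : HasDerivAt (fun x : ℝ => 3 * (a + 1) ^ 2 + 2 * b + 2 * x) 2 h := by
    simpa using (((hasDerivAt_id h).const_mul (2:ℝ)).const_add (3 * (a + 1) ^ 2 + 2 * b))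
  have ht1 : HasDerivAt (fun x : ℝ => (-6 : ℝ) * Real.sqrt (2 * x))
      ((-6 : ℝ) * (1 / Real.sqrt (2 * h))) h := hS.const_mul _
  have ht2 : HasDerivAt (fun x : ℝ => 2 * Real.pi * x) (2 * Real.pi) h := by
    simpa using (hasDerivAt_id h).const_mul (2 * Real.pi)
  have ht5 := hCm.mul hAm
  have ht6 := hCp.mul hAp
  have hsum := ((((ht1.sub_const ((3 * a ^ 2 + 6 * a + 2 * b + 3) * Real.pi)).sub
      ht2).sub ht5).add ht6)
  unfold M1 M2
  convert hsum using 1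
  try ring
  all_goals rfl

/-- For `a > 1` and `b < 0`, `M''(h) < 0` for every `h ≥ (a² - 1)/2`. -/
theorem melnikov_second_deriv_neg (a b : ℝ) (ha : 1 < a) (hb : b < 0) :
    ∀ h : ℝ, (a ^ 2 - 1) / 2 ≤ h → deriv (deriv (Mel a b)) h < 0 := by
  intro h hge
  have ha2 : 1 < a ^ 2 := by nlinarith
  have hh : 0 < h := by nlinarith
  -- deriv (Mel a b) = M1 a b near h
  have hev : deriv (Mel a b) =ᶠ[nhds h] M1 a b := by
    filter_upwards [Ioi_mem_nhds hh] with x hx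
    exact (Mel_hasDeriv a b ha hx).deriv
  rw [hev.deriv_eq, (M1_hasDeriv a b ha hh).deriv]
  -- now show M2 < 0
  unfold M2
  have hs : (0:ℝ) < Real.sqrt (2 * h) := Real.sqrt_pos.mpr (by linarith)
  have hs2 : Real.sqrt (2 * h) ^ 2 = 2 * h := Real.sq_sqrt (by linarith)
  set s := Real.sqrt (2 * h) with hsdef
  have hDm : (0:ℝ) < (a - 1) ^ 2 + 2 * h := by positivity
  have hDp : (0:ℝ) < (a + 1) ^ 2 + 2 * h := by positivity
  have hAle : Real.arctan (s / (a + 1)) ≤ Real.arctan (s / (a - 1)) := by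
    apply Real.arctan_strictMono.monotone
    apply div_le_div_of_nonneg_left hs.le (by linarith) (by linarith)
  have hX : (3 * (a + 1) ^ 2 + 2 * b + 2 * h) * (a + 1) / ((a + 1) ^ 2 + 2 * h)
      - (3 * (a - 1) ^ 2 + 2 * b + 2 * h) * (a - 1) / ((a - 1) ^ 2 + 2 * h) ≤ 6 := by
    rw [div_sub_div _ _ hDp.ne' hDm.ne', div_le_iff₀ (by positivity)]
    nlinarith [mul_nonneg (by linarith : (0:ℝ) ≤ 2 * h - (a ^ 2 - 1))
      (by linarith : (0:ℝ) ≤ 2 * h - b)]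
  have e1 : (3 * (a - 1) ^ 2 + 2 * b + 2 * h)
      * ((a - 1) / (((a - 1) ^ 2 + 2 * h) * s))
      = ((3 * (a - 1) ^ 2 + 2 * b + 2 * h) * (a - 1) / ((a - 1) ^ 2 + 2 * h)) / s := by
    field_simp
  have e2 : (3 * (a + 1) ^ 2 + 2 * b + 2 * h)
      * ((a + 1) / (((a + 1) ^ 2 + 2 * h) * s))
      = ((3 * (a + 1) ^ 2 + 2 * b + 2 * h) * (a + 1) / ((a + 1) ^ 2 + 2 * h)) / s := by
    field_simp
  rw [e1, e2]
  have h1 : ((3 * (a + 1) ^ 2 + 2 * b + 2 * h) * (a + 1) / ((a + 1) ^ 2 + 2 * h)) / s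
      - ((3 * (a - 1) ^ 2 + 2 * b + 2 * h) * (a - 1) / ((a - 1) ^ 2 + 2 * h)) / s
      ≤ 6 / s := by
    rw [div_sub_div_same, div_le_div_iff₀ hs hs]
    nlinarith [hX, hs]
  have h2 : (-6 : ℝ) * (1 / s) = -(6 / s) := by ring
  linarith [Real.pi_pos, hAle, h1, h2]
end

section
/- Let a > 1 and -(3/2)(a+1)² < b < 0. If there exists h̄ > 0 with M′(h̄) > 0, then the derivative M′ of the Melnikov function has exactly two zeros h₁₁ < h₁₂ on (0,∞); moreover M′(h) < 0 for 0 < h < h₁₁, M′(h) > 0 for h₁₁ < h < h₁₂, and M′(h) < 0 for h > h₁₂. -/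
set_option maxHeartbeats 1000000
open Real


noncomputable def Fm (a b t : ℝ) : ℝ :=
  -π * (3 * (a + 1) ^ 2 + 2 * b) - π * t ^ 2 - 6 * t
    - (3 * (a - 1) ^ 2 + 2 * b + t ^ 2) * arctan (t / (a - 1))
    + (3 * (a + 1) ^ 2 + 2 * b + t ^ 2) * arctan (t / (a + 1))

noncomputable def Fm1 (a b t : ℝ) : ℝ :=
  -2 * π * t - 6 - 2 * t * arctan (t / (a - 1))
    - (3 * (a - 1) ^ 2 + 2 * b + t ^ 2) * (a - 1) / ((a - 1) ^ 2 + t ^ 2)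
    + 2 * t * arctan (t / (a + 1))
    + (3 * (a + 1) ^ 2 + 2 * b + t ^ 2) * (a + 1) / ((a + 1) ^ 2 + t ^ 2)

noncomputable def Fm2 (a b t : ℝ) : ℝ :=
  -2 * π - 2 * arctan (t / (a - 1)) + 2 * arctan (t / (a + 1))
    - 2 * t * (a - 1) / ((a - 1) ^ 2 + t ^ 2)
    + 2 * t * (a + 1) / ((a + 1) ^ 2 + t ^ 2)
    + 4 * t * (a - 1) * ((a - 1) ^ 2 + b) / ((a - 1) ^ 2 + t ^ 2) ^ 2
    - 4 * t * (a + 1) * ((a + 1) ^ 2 + b) / ((a + 1) ^ 2 + t ^ 2) ^ 2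

lemma hasDerivAt_arctan_div (c t : ℝ) (hc : c ≠ 0) :
    HasDerivAt (fun x => arctan (x / c)) (c / (c ^ 2 + t ^ 2)) t := by
  have h1 : HasDerivAt (fun x : ℝ => x / c) (1 / c) t := by
    simpa using (hasDerivAt_id t).div_const c
  have := (Real.hasDerivAt_arctan (t / c)).comp t h1
  refine this.congr_deriv ?_
  field_simp

lemma hasDerivAt_Fm (a b t : ℝ) (ha : 1 < a) :
    HasDerivAt (Fm a b) (Fm1 a b t) t := by
  have ha1 : a - 1 ≠ 0 := by linarith
  have ha2 : a + 1 ≠ 0 := by linarith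
  have hP1 : (a - 1) ^ 2 + t ^ 2 ≠ 0 := by positivity
  have hP2 : (a + 1) ^ 2 + t ^ 2 ≠ 0 := by positivity
  have hq1 : HasDerivAt (fun x : ℝ => 3 * (a - 1) ^ 2 + 2 * b + x ^ 2) (2 * t) t := by
    simpa using (hasDerivAt_pow 2 t).const_add (3 * (a - 1) ^ 2 + 2 * b)
  have hq2 : HasDerivAt (fun x : ℝ => 3 * (a + 1) ^ 2 + 2 * b + x ^ 2) (2 * t) t := by
    simpa using (hasDerivAt_pow 2 t).const_add (3 * (a + 1) ^ 2 + 2 * b)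
  have hA1 := hasDerivAt_arctan_div (a - 1) t ha1
  have hA2 := hasDerivAt_arctan_div (a + 1) t ha2
  have hT1 := hq1.mul hA1
  have hT2 := hq2.mul hA2
  have hsq : HasDerivAt (fun x : ℝ => π * x ^ 2) (π * (2 * t)) t := by
    simpa using (hasDerivAt_pow 2 t).const_mul π
  have hlin : HasDerivAt (fun x : ℝ => 6 * x) 6 t := by
    simpa using (hasDerivAt_id t).const_mul 6
  have hC : HasDerivAt (fun _ : ℝ => -π * (3 * (a + 1) ^ 2 + 2 * b)) 0 t := hasDerivAt_const _ _
  have := ((((hC.sub hsq).sub hlin).sub hT1).add hT2)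
  refine this.congr_deriv ?_
  unfold Fm1
  field_simp
  ring

example : True := trivial

lemma hasDerivAt_Fm1 (a b t : ℝ) (ha : 1 < a) :
    HasDerivAt (Fm1 a b) (Fm2 a b t) t := by
  have ha1 : a - 1 ≠ 0 := by linarith
  have ha2 : a + 1 ≠ 0 := by linarith
  have hP1 : (a - 1) ^ 2 + t ^ 2 ≠ 0 := by positivity
  have hP2 : (a + 1) ^ 2 + t ^ 2 ≠ 0 := by positivity
  have hA1 := hasDerivAt_arctan_div (a - 1) t ha1
  have hA2 := hasDerivAt_arctan_div (a + 1) t ha2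
  have hid : HasDerivAt (fun x : ℝ => x) 1 t := hasDerivAt_id t
  have hT1 : HasDerivAt (fun x : ℝ => 2 * x * arctan (x / (a - 1)))
      (2 * 1 * arctan (t / (a - 1)) + 2 * t * ((a - 1) / ((a - 1) ^ 2 + t ^ 2))) t := by
    have := ((hid.const_mul 2).mul hA1)
    exact this.congr_deriv (by ring)
  have hT2 : HasDerivAt (fun x : ℝ => 2 * x * arctan (x / (a + 1)))
      (2 * 1 * arctan (t / (a + 1)) + 2 * t * ((a + 1) / ((a + 1) ^ 2 + t ^ 2))) t := by
    have := ((hid.const_mul 2).mul hA2)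
    exact this.congr_deriv (by ring)
  have hnum1 : HasDerivAt (fun x : ℝ => (3 * (a - 1) ^ 2 + 2 * b + x ^ 2) * (a - 1))
      (2 * t * (a - 1)) t := by
    have : HasDerivAt (fun x : ℝ => 3 * (a - 1) ^ 2 + 2 * b + x ^ 2) (2 * t) t := by
      simpa using (hasDerivAt_pow 2 t).const_add (3 * (a - 1) ^ 2 + 2 * b)
    simpa using this.mul_const (a - 1)
  have hnum2 : HasDerivAt (fun x : ℝ => (3 * (a + 1) ^ 2 + 2 * b + x ^ 2) * (a + 1))
      (2 * t * (a + 1)) t := by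
    have : HasDerivAt (fun x : ℝ => 3 * (a + 1) ^ 2 + 2 * b + x ^ 2) (2 * t) t := by
      simpa using (hasDerivAt_pow 2 t).const_add (3 * (a + 1) ^ 2 + 2 * b)
    simpa using this.mul_const (a + 1)
  have hden1 : HasDerivAt (fun x : ℝ => (a - 1) ^ 2 + x ^ 2) (2 * t) t := by
    simpa using (hasDerivAt_pow 2 t).const_add ((a - 1) ^ 2)
  have hden2 : HasDerivAt (fun x : ℝ => (a + 1) ^ 2 + x ^ 2) (2 * t) t := by
    simpa using (hasDerivAt_pow 2 t).const_add ((a + 1) ^ 2)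
  have hQ1 := hnum1.div hden1 hP1
  have hQ2 := hnum2.div hden2 hP2
  have hlin : HasDerivAt (fun x : ℝ => -2 * π * x - 6) (-2 * π) t := by
    simpa using ((hid.const_mul (-2 * π)).sub_const 6)
  have := ((((hlin.sub hT1).sub hQ1).add hT2).add hQ2)
  refine this.congr_deriv ?_
  unfold Fm2
  field_simp
  ring

lemma Fm2_neg (a b t : ℝ) (ha : 1 < a) (hb1 : -(3 / 2) * (a + 1) ^ 2 < b) (hb2 : b < 0)
    (ht : 0 < t) : Fm2 a b t < 0 := by
  have ha1 : (0:ℝ) < a - 1 := by linarith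
  have ha2 : (0:ℝ) < a + 1 := by linarith
  have hP1 : (0:ℝ) < (a - 1) ^ 2 + t ^ 2 := by positivity
  have hP2 : (0:ℝ) < (a + 1) ^ 2 + t ^ 2 := by positivity
  -- arctan comparison
  have harct : arctan (t / (a + 1)) ≤ arctan (t / (a - 1)) := by
    apply Real.arctan_strictMono.monotone
    rw [div_le_div_iff₀ ha2 ha1]
    nlinarith
  -- term bounds
  have h2 : 2 * t * (a + 1) / ((a + 1) ^ 2 + t ^ 2) ≤ 1 := by
    rw [div_le_one hP2]; nlinarith [sq_nonneg (a + 1 - t)]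
  have h3 : 2 * t * (a - 1) / ((a - 1) ^ 2 + t ^ 2) ≥ 0 := by positivity
  have h4 : 4 * t * (a - 1) * ((a - 1) ^ 2 + b) / ((a - 1) ^ 2 + t ^ 2) ^ 2 ≤ 2 := by
    rw [div_le_iff₀ (by positivity)]
    nlinarith [sq_nonneg (a - 1 - t), sq_nonneg ((a-1)^2 + t^2), sq_nonneg (t*(a-1)),
      mul_pos ha1 ht]
  have h5 : -1 ≤ 4 * t * (a + 1) * ((a + 1) ^ 2 + b) / ((a + 1) ^ 2 + t ^ 2) ^ 2 := by
    rw [le_div_iff₀ (by positivity)]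
    nlinarith [sq_nonneg (a + 1 - t), mul_pos ht ha2, sq_nonneg t,
      mul_nonneg (sq_nonneg (a + 1 - t)) (sq_nonneg t),
      mul_nonneg (sq_nonneg (a + 1 - t)) (sq_nonneg (a + 1))]
  have hpi := Real.pi_gt_three
  unfold Fm2
  have e1 : 4 * t * (a - 1) * ((a - 1) ^ 2 + b) / ((a - 1) ^ 2 + t ^ 2) ^ 2 ≤ 2 := h4
  linarith

lemma continuous_Fm (a b : ℝ) : Continuous (Fm a b) := by
  unfold Fm
  have h1 : Continuous fun t : ℝ => arctan (t / (a - 1)) :=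
    Real.continuous_arctan.comp (continuous_id.div_const _)
  have h2 : Continuous fun t : ℝ => arctan (t / (a + 1)) :=
    Real.continuous_arctan.comp (continuous_id.div_const _)
  continuity

lemma strictConcave_Fm (a b : ℝ) (ha : 1 < a) (hb1 : -(3 / 2) * (a + 1) ^ 2 < b)
    (hb2 : b < 0) : StrictConcaveOn ℝ (Set.Ici 0) (Fm a b) := by
  apply strictConcaveOn_of_deriv2_neg (convex_Ici 0) (continuous_Fm a b).continuousOn
  intro x hx
  rw [interior_Ici] at hx
  have hd : deriv (Fm a b) = Fm1 a b := funext fun t => (hasDerivAt_Fm a b t ha).deriv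
  have : deriv^[2] (Fm a b) x = deriv (deriv (Fm a b)) x := rfl
  rw [this, hd, (hasDerivAt_Fm1 a b x ha).deriv]
  exact Fm2_neg a b x ha hb1 hb2 hx

lemma concave_three {f : ℝ → ℝ} (hf : StrictConcaveOn ℝ (Set.Ici 0) f) {x y z : ℝ}
    (hx : 0 ≤ x) (hxy : x < y) (hyz : y < z) :
    (z - y) * f x + (y - x) * f z < (z - x) * f y := by
  have hxz : x < z := hxy.trans hyz
  have h1 : (0:ℝ) < z - x := by linarith
  have key := hf.2 (Set.mem_Ici.2 hx) (Set.mem_Ici.2 (by linarith : (0:ℝ) ≤ z))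
    (ne_of_lt hxz) (show (0:ℝ) < (z - y) / (z - x) from div_pos (by linarith) h1)
    (show (0:ℝ) < (y - x) / (z - x) from div_pos (by linarith) h1)
    (by rw [← add_div, div_eq_one_iff_eq h1.ne']; ring)
  simp only [smul_eq_mul] at key
  have hy : (z - y) / (z - x) * x + (y - x) / (z - x) * z = y := by
    field_simp
    ring
  rw [hy, div_mul_eq_mul_div, div_mul_eq_mul_div, ← add_div,
    div_lt_iff₀ h1] at key
  nlinarith [key]

lemma hasDerivAt_arctan_sqrt (c : ℝ) (hc : 0 < c) (h : ℝ) (hh : 0 < h) :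
    HasDerivAt (fun x => arctan (Real.sqrt (2 * x) / c))
      (c / (Real.sqrt (2 * h) * (c ^ 2 + 2 * h))) h := by
  have h2h : (0:ℝ) < 2 * h := by linarith
  have hu : 0 < Real.sqrt (2 * h) := Real.sqrt_pos.2 h2h
  have hu2 : Real.sqrt (2 * h) ^ 2 = 2 * h := Real.sq_sqrt h2h.le
  have hinner : HasDerivAt (fun x : ℝ => 2 * x) 2 h := by
    simpa using (hasDerivAt_id h).const_mul 2
  have hsq : HasDerivAt (fun x : ℝ => Real.sqrt (2 * x))
      (1 / (2 * Real.sqrt (2 * h)) * 2) h :=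
    (Real.hasDerivAt_sqrt h2h.ne').comp h hinner
  have hdiv := hsq.div_const c
  have := (Real.hasDerivAt_arctan (Real.sqrt (2 * h) / c)).comp h hdiv
  refine this.congr_deriv ?_
  rw [div_pow, hu2]
  field_simp

lemma hasDerivAt_Mel (a b h : ℝ) (ha : 1 < a) (hh : 0 < h) :
    HasDerivAt (Mel a b) (Fm a b (Real.sqrt (2 * h))) h := by
  have ha1 : (0:ℝ) < a - 1 := by linarith
  have ha2 : (0:ℝ) < a + 1 := by linarith
  have h2h : (0:ℝ) < 2 * h := by linarith
  have hs : 0 < Real.sqrt h := Real.sqrt_pos.2 hh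
  have hs2 : Real.sqrt h ^ 2 = h := Real.sq_sqrt hh.le
  have hu : 0 < Real.sqrt (2 * h) := Real.sqrt_pos.2 h2h
  have hu2 : Real.sqrt (2 * h) ^ 2 = 2 * h := Real.sq_sqrt h2h.le
  have hr : (0:ℝ) < Real.sqrt 2 := by positivity
  have hsplit : Real.sqrt (2 * h) = Real.sqrt 2 * Real.sqrt h :=
    Real.sqrt_mul (by norm_num) h
  have e1 : HasDerivAt (fun _ : ℝ =>
      -(π / 4) * (a + 1) ^ 2 * (5 * a ^ 2 + 10 * a + 4 * b + 5)) 0 h := hasDerivAt_const _ _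
  have e2 : HasDerivAt (fun x => (15 * a ^ 2 + 4 * b + 5) * Real.sqrt x / Real.sqrt 2)
      ((15 * a ^ 2 + 4 * b + 5) / (2 * Real.sqrt (2 * h))) h := by
    have := ((Real.hasDerivAt_sqrt hh.ne').const_mul (15 * a ^ 2 + 4 * b + 5)).div_const
      (Real.sqrt 2)
    refine this.congr_deriv ?_
    rw [hsplit]
    field_simp
  have e3 : HasDerivAt (fun x : ℝ => (3 * a ^ 2 + 6 * a + 2 * b + 3) * π * x)
      ((3 * a ^ 2 + 6 * a + 2 * b + 3) * π) h := by
    simpa using (hasDerivAt_id h).const_mul ((3 * a ^ 2 + 6 * a + 2 * b + 3) * π)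
  have e4 : HasDerivAt (fun x => (13 * Real.sqrt 2 / 3) * (x * Real.sqrt x))
      ((13 / 2) * Real.sqrt (2 * h)) h := by
    have hx : HasDerivAt (fun x : ℝ => x * Real.sqrt x)
        (1 * Real.sqrt h + h * (1 / (2 * Real.sqrt h))) h :=
      (hasDerivAt_id h).mul (Real.hasDerivAt_sqrt hh.ne')
    have := hx.const_mul (13 * Real.sqrt 2 / 3)
    refine this.congr_deriv ?_
    rw [hsplit]
    field_simp
    nlinarith [hs2, hs]
  have e5 : HasDerivAt (fun x : ℝ => π * x ^ 2) (π * (2 * h)) h := by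
    simpa using (hasDerivAt_pow 2 h).const_mul π
  have hA1 : HasDerivAt (fun x : ℝ => a ^ 2 - 2 * a + 2 * x + 1) 2 h := by
    simpa using (((hasDerivAt_id h).const_mul 2).const_add (a ^ 2 - 2 * a)).add_const 1
  have hB1 : HasDerivAt (fun x : ℝ => 5 * a ^ 2 - 10 * a + 4 * b + 2 * x + 5) 2 h := by
    simpa using (((hasDerivAt_id h).const_mul 2).const_add
      (5 * a ^ 2 - 10 * a + 4 * b)).add_const 5
  have hA2 : HasDerivAt (fun x : ℝ => a ^ 2 + 2 * a + 2 * x + 1) 2 h := by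
    simpa using (((hasDerivAt_id h).const_mul 2).const_add (a ^ 2 + 2 * a)).add_const 1
  have hB2 : HasDerivAt (fun x : ℝ => 5 * a ^ 2 + 10 * a + 4 * b + 2 * x + 5) 2 h := by
    simpa using (((hasDerivAt_id h).const_mul 2).const_add
      (5 * a ^ 2 + 10 * a + 4 * b)).add_const 5
  have hT6 := ((hA1.const_mul (1/4 : ℝ)).mul hB1).mul
    (hasDerivAt_arctan_sqrt (a - 1) ha1 h hh)
  have hT7 := ((hA2.const_mul (1/4 : ℝ)).mul hB2).mul
    (hasDerivAt_arctan_sqrt (a + 1) ha2 h hh)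
  have htot := (((((e1.sub e2).sub e3).sub e4).sub e5).sub hT6).add hT7
  have hMel : Mel a b = fun x =>
      ((((((-(π / 4) * (a + 1) ^ 2 * (5 * a ^ 2 + 10 * a + 4 * b + 5)
        - (15 * a ^ 2 + 4 * b + 5) * Real.sqrt x / Real.sqrt 2)
        - (3 * a ^ 2 + 6 * a + 2 * b + 3) * π * x)
        - (13 * Real.sqrt 2 / 3) * (x * Real.sqrt x))
        - π * x ^ 2)
        - (1 / 4) * (a ^ 2 - 2 * a + 2 * x + 1) * (5 * a ^ 2 - 10 * a + 4 * b + 2 * x + 5)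
          * Real.arctan (Real.sqrt (2 * x) / (a - 1)))
        + (1 / 4) * (a ^ 2 + 2 * a + 2 * x + 1) * (5 * a ^ 2 + 10 * a + 4 * b + 2 * x + 5)
          * Real.arctan (Real.sqrt (2 * x) / (a + 1))) := rfl
  rw [hMel]
  refine htot.congr_deriv ?_
  simp only [Pi.mul_apply]
  have hh' : h = Real.sqrt (2 * h) ^ 2 / 2 := by rw [hu2]; ring
  unfold Fm
  rw [hh']
  rw [show 2 * (Real.sqrt (2 * h) ^ 2 / 2) = Real.sqrt (2 * h) ^ 2 by ring, Real.sqrt_sq hu.le]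
  have hne1 : a - 1 ≠ 0 := ha1.ne'
  have hne2 : a + 1 ≠ 0 := ha2.ne'
  field_simp
  ring


/-- If `a > 1`, `-(3/2)(a+1)² < b < 0` and `M'` is positive somewhere on `(0,∞)`,
then `M'` has exactly two zeros `h₁₁ < h₁₂` on `(0,∞)`, being negative on `(0, h₁₁)`,
positive on `(h₁₁, h₁₂)` and negative on `(h₁₂, ∞)`. -/
theorem melnikov_first_deriv_two_zeros (a b : ℝ) (ha : 1 < a)
    (hb1 : -(3 / 2) * (a + 1) ^ 2 < b) (hb2 : b < 0)
    (hpos : ∃ hbar : ℝ, 0 < hbar ∧ 0 < deriv (Mel a b) hbar) :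
    ∃ h₁₁ h₁₂ : ℝ, 0 < h₁₁ ∧ h₁₁ < h₁₂ ∧
      deriv (Mel a b) h₁₁ = 0 ∧ deriv (Mel a b) h₁₂ = 0 ∧
      (∀ h : ℝ, 0 < h → h < h₁₁ → deriv (Mel a b) h < 0) ∧
      (∀ h : ℝ, h₁₁ < h → h < h₁₂ → 0 < deriv (Mel a b) h) ∧
      (∀ h : ℝ, h₁₂ < h → deriv (Mel a b) h < 0) := by
  obtain ⟨hbar, hbar0, hMd⟩ := hpos
  have ha2 : (0:ℝ) < a + 1 := by linarith
  have hK : (0:ℝ) < 3 * (a + 1) ^ 2 + 2 * b := by nlinarith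
  have hderiv : ∀ x : ℝ, 0 < x → deriv (Mel a b) x = Fm a b (Real.sqrt (2 * x)) :=
    fun x hx => (hasDerivAt_Mel a b x ha hx).deriv
  set t₀ := Real.sqrt (2 * hbar) with ht₀def
  have ht₀ : 0 < t₀ := Real.sqrt_pos.2 (by linarith)
  have hFt₀ : 0 < Fm a b t₀ := by rw [hderiv hbar hbar0] at hMd; exact hMd
  have hF0 : Fm a b 0 < 0 := by
    have : Fm a b 0 = -π * (3 * (a + 1) ^ 2 + 2 * b) := by
      unfold Fm
      simp [Real.arctan_zero]
    rw [this]
    nlinarith [Real.pi_pos]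
  -- a point to the right where Fm is negative
  set T := t₀ + 2 * (a + 1) with hTdef
  have hTt : t₀ < T := by nlinarith
  have hT0 : 0 < T := by nlinarith
  have hFT : Fm a b T < 0 := by
    have hKm : 0 ≤ 3 * (a - 1) ^ 2 + 2 * b + T ^ 2 := by nlinarith
    have harc1 : 0 ≤ arctan (T / (a - 1)) := by
      rw [← Real.arctan_zero]
      exact Real.arctan_strictMono.monotone (div_nonneg hT0.le (by linarith))
    have harc2 : arctan (T / (a + 1)) ≤ π / 2 := (Real.arctan_lt_pi_div_two _).le
    have hKp : (0:ℝ) < 3 * (a + 1) ^ 2 + 2 * b + T ^ 2 := by nlinarith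
    have p1 : 0 ≤ (3 * (a - 1) ^ 2 + 2 * b + T ^ 2) * arctan (T / (a - 1)) :=
      mul_nonneg hKm harc1
    have p2 : (3 * (a + 1) ^ 2 + 2 * b + T ^ 2) * arctan (T / (a + 1))
        ≤ (3 * (a + 1) ^ 2 + 2 * b + T ^ 2) * (π / 2) :=
      mul_le_mul_of_nonneg_left harc2 hKp.le
    unfold Fm
    nlinarith [Real.pi_pos, mul_pos Real.pi_pos hK, mul_pos Real.pi_pos (mul_pos hT0 hT0),
      sq_nonneg T]
  have hcont : Continuous (Fm a b) := continuous_Fm a b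
  -- first zero
  obtain ⟨z₁, hz₁mem, hz₁⟩ := intermediate_value_Ioo ht₀.le hcont.continuousOn
    (Set.mem_Ioo.2 ⟨hF0, hFt₀⟩)
  obtain ⟨z₂, hz₂mem, hz₂⟩ := intermediate_value_Ioo' hTt.le hcont.continuousOn
    (Set.mem_Ioo.2 ⟨hFT, hFt₀⟩)
  obtain ⟨hz₁0, hz₁t⟩ := hz₁mem
  obtain ⟨hz₂t, hz₂T⟩ := hz₂mem
  have hconc := strictConcave_Fm a b ha hb1 hb2
  have hz₁z₂ : z₁ < z₂ := hz₁t.trans hz₂t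
  have hz₂0 : 0 < z₂ := hz₁0.trans hz₁z₂
  have hh1pos : 0 < z₁ ^ 2 / 2 := div_pos (pow_pos hz₁0 2) two_pos
  have hh2pos : 0 < z₂ ^ 2 / 2 := div_pos (pow_pos hz₂0 2) two_pos
  refine ⟨z₁ ^ 2 / 2, z₂ ^ 2 / 2, hh1pos, by nlinarith, ?_, ?_, ?_, ?_, ?_⟩
  · rw [hderiv _ hh1pos, show 2 * (z₁ ^ 2 / 2) = z₁ ^ 2 by ring,
      Real.sqrt_sq hz₁0.le, hz₁]
  · rw [hderiv _ hh2pos, show 2 * (z₂ ^ 2 / 2) = z₂ ^ 2 by ring,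
      Real.sqrt_sq hz₂0.le, hz₂]
  · -- negative on (0, h₁₁)
    intro x hx0 hx1
    rw [hderiv x hx0]
    set t := Real.sqrt (2 * x) with htdef
    have htpos : 0 < t := Real.sqrt_pos.2 (by linarith)
    have htz : t < z₁ := by
      have : (2 * x) < z₁ ^ 2 := by nlinarith
      calc t < Real.sqrt (z₁ ^ 2) := Real.sqrt_lt_sqrt (by positivity) this
        _ = z₁ := Real.sqrt_sq hz₁0.le
    by_contra hcon
    push_neg at hcon
    have key := concave_three hconc htpos.le htz hz₁t
    rw [hz₁] at key
    nlinarith [mul_pos (sub_pos.2 htz) hFt₀]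
  · -- positive on (h₁₁, h₁₂)
    intro x hx1 hx2
    have hx0 : 0 < x := hh1pos.trans hx1
    rw [hderiv x hx0]
    set t := Real.sqrt (2 * x) with htdef
    have htz1 : z₁ < t := by
      have h2x : z₁ ^ 2 < 2 * x := by nlinarith
      calc z₁ = Real.sqrt (z₁ ^ 2) := (Real.sqrt_sq hz₁0.le).symm
        _ < t := Real.sqrt_lt_sqrt (by positivity) h2x
    have htz2 : t < z₂ := by
      have h2x : 2 * x < z₂ ^ 2 := by nlinarith
      calc t < Real.sqrt (z₂ ^ 2) := Real.sqrt_lt_sqrt (by positivity) h2x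
        _ = z₂ := Real.sqrt_sq hz₂0.le
    rcases lt_trichotomy t t₀ with hlt | heq | hgt
    · have key := concave_three hconc hz₁0.le htz1 hlt
      rw [hz₁] at key
      nlinarith [mul_pos (sub_pos.2 htz1) hFt₀]
    · rw [heq]; exact hFt₀
    · have key := concave_three hconc ht₀.le hgt htz2
      rw [hz₂] at key
      nlinarith [mul_pos (sub_pos.2 htz2) hFt₀]
  · -- negative on (h₁₂, ∞)
    intro x hx2
    have hx0 : 0 < x := hh2pos.trans hx2
    rw [hderiv x hx0]
    set t := Real.sqrt (2 * x) with htdef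
    have htz2 : z₂ < t := by
      have h2x : z₂ ^ 2 < 2 * x := by nlinarith
      calc z₂ = Real.sqrt (z₂ ^ 2) := (Real.sqrt_sq hz₂0.le).symm
        _ < t := Real.sqrt_lt_sqrt (by positivity) h2x
    have key := concave_three hconc ht₀.le hz₂t htz2
    rw [hz₂] at key
    nlinarith [mul_pos (sub_pos.2 hz₂t) hFt₀]
end

section
/- For every a with 1 < a < 2 and every h with 0 < h < 3/2, the quantity J(h, a) = 5√2·(1-3a)·√h - π(a+1)h + (a+1)·h·arctan(√(2h)/(a+1)) + (15a² - 20a + 5 + (11-a)h)·arctan(√(2h)/(a-1)) is strictly negative. -/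
open Real

lemma my_arctan_le_self {x : ℝ} (hx : 0 ≤ x) : Real.arctan x ≤ x := by
  have hd : ∀ y : ℝ, HasDerivAt (fun z : ℝ => z - Real.arctan z) (1 - 1/(1+y^2)) y :=
    fun y => (hasDerivAt_id y).sub (Real.hasDerivAt_arctan y)
  have hmono : MonotoneOn (fun z : ℝ => z - Real.arctan z) (Set.Ici (0:ℝ)) := by
    apply monotoneOn_of_deriv_nonneg (convex_Ici 0)
    · exact (continuous_id.sub Real.continuous_arctan).continuousOn
    · intro y _
      exact (hd y).differentiableAt.differentiableWithinAt
    · intro y _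
      rw [(hd y).deriv]
      have h1 : (0:ℝ) < 1 + y^2 := by positivity
      rw [sub_nonneg, div_le_one h1]
      nlinarith [sq_nonneg y]
  have := hmono (Set.self_mem_Ici) (Set.mem_Ici.2 hx) hx
  simp only [Real.arctan_zero, sub_zero] at this
  linarith

lemma my_arctan_lb {x : ℝ} (hx : 0 ≤ x) : x - x^3/3 ≤ Real.arctan x := by
  have hd : ∀ y : ℝ, HasDerivAt (fun z : ℝ => Real.arctan z - (z - z^3/3))
      (1/(1+y^2) - (1 - y^2)) y := by
    intro y
    have h1 : HasDerivAt (fun z : ℝ => z - z^3/3) (1 - y^2) y := by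
      have := (hasDerivAt_id y).sub ((hasDerivAt_pow 3 y).div_const 3)
      refine this.congr_deriv ?_
      push_cast; ring
    exact (Real.hasDerivAt_arctan y).sub h1
  have hmono : MonotoneOn (fun z : ℝ => Real.arctan z - (z - z^3/3)) (Set.Ici (0:ℝ)) := by
    apply monotoneOn_of_deriv_nonneg (convex_Ici 0)
    · exact (Real.continuous_arctan.sub (by continuity)).continuousOn
    · intro y _
      exact (hd y).differentiableAt.differentiableWithinAt
    · intro y hy
      rw [(hd y).deriv]
      have h1 : (0:ℝ) < 1 + y^2 := by positivity
      rw [sub_nonneg, le_div_iff₀ h1]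
      nlinarith [sq_nonneg (y^2), sq_nonneg y]
  have := hmono (Set.self_mem_Ici) (Set.mem_Ici.2 hx) hx
  simp only [Real.arctan_zero] at this
  norm_num at this
  linarith

lemma my_arctan_ub {x : ℝ} (hx : 0 ≤ x) : Real.arctan x ≤ x - x^3/3 + x^5/5 := by
  have hd : ∀ y : ℝ, HasDerivAt (fun z : ℝ => z - z^3/3 + z^5/5 - Real.arctan z)
      ((1 - y^2 + y^4) - 1/(1+y^2)) y := by
    intro y
    have h1 : HasDerivAt (fun z : ℝ => z - z^3/3 + z^5/5) (1 - y^2 + y^4) y := by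
      have := ((hasDerivAt_id y).sub ((hasDerivAt_pow 3 y).div_const 3)).add
        ((hasDerivAt_pow 5 y).div_const 5)
      refine this.congr_deriv ?_
      push_cast; ring
    exact h1.sub (Real.hasDerivAt_arctan y)
  have hmono : MonotoneOn (fun z : ℝ => z - z^3/3 + z^5/5 - Real.arctan z) (Set.Ici (0:ℝ)) := by
    apply monotoneOn_of_deriv_nonneg (convex_Ici 0)
    · exact ((by continuity : Continuous fun z : ℝ => z - z^3/3 + z^5/5).sub Real.continuous_arctan).continuousOn
    · intro y _
      exact (hd y).differentiableAt.differentiableWithinAt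
    · intro y _
      rw [(hd y).deriv]
      have h1 : (0:ℝ) < 1 + y^2 := by positivity
      rw [sub_nonneg, div_le_iff₀ h1]
      nlinarith [sq_nonneg (y^3), sq_nonneg y, sq_nonneg (y^2)]
  have := hmono (Set.self_mem_Ici) (Set.mem_Ici.2 hx) hx
  simp only [Real.arctan_zero] at this
  norm_num at this
  linarith

theorem poly1 (b s p : ℝ) (hb0 : 0 < b) (hb1 : b ≤ 1) (hs0 : 0 < s) (hsb : s ≤ b)
    (hp : 3.14 < p) :
    -15*p*b^6 - 30*p*b^5 - 100*b^3*s + 40*b^2*s^3 + 60*b*s^3 + 5*b^3*s^3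
      + 30*s^5 - 3*b*s^5 < 0 := by
  have hp0 : (0:ℝ) < p := by linarith
  have e1 : s^3 ≤ b^2*s := by
    nlinarith [mul_nonneg (mul_nonneg hs0.le (sub_nonneg.2 hsb)) (by linarith : (0:ℝ) ≤ b + s)]
  have e2 : s^5 ≤ b^4*s := by
    nlinarith [mul_nonneg (mul_nonneg hs0.le (sub_nonneg.2 hsb))
      (by nlinarith [sq_nonneg b, sq_nonneg s] : (0:ℝ) ≤ (b+s)*(b^2+s^2))]
  have hb5 : (0:ℝ) < b^5 := by positivity
  have hb6 : b^6 ≤ b^5 := by nlinarith [pow_pos hb0 5]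
  have key : -100*b^3*s + 40*b^2*s^3 + 60*b*s^3 + 5*b^3*s^3 + 30*s^5 - 3*b*s^5
      ≤ b^3*s*(70*b + 5*b^2 - 40) := by
    nlinarith [mul_nonneg (sub_nonneg.2 e1) (mul_nonneg hb0.le hb0.le),
      mul_nonneg (sub_nonneg.2 e1) hb0.le, mul_nonneg (sub_nonneg.2 e2) hb0.le,
      sub_nonneg.2 e2, mul_nonneg hb0.le (mul_nonneg hs0.le (mul_nonneg hs0.le (mul_nonneg hs0.le (mul_nonneg hs0.le hs0.le))))]
  rcases le_or_gt (70*b + 5*b^2) 40 with hc | hc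
  · have h2 : b^3*s*(70*b + 5*b^2 - 40) ≤ 0 :=
      mul_nonpos_of_nonneg_of_nonpos (by positivity) (by linarith)
    nlinarith [mul_pos (mul_pos hb5 hb0) hp0, mul_pos hb5 hp0]
  · have h2 : b^3*s*(70*b + 5*b^2 - 40) ≤ b^3*b*(70*b + 5*b^2 - 40) := by
      apply mul_le_mul_of_nonneg_right _ (by linarith)
      exact mul_le_mul_of_nonneg_left hsb (by positivity)
    have h4 : 94*b^5 < 30*p*b^5 := by nlinarith
    have h5 : (0:ℝ) < 15*p*b^6 := by positivity
    nlinarith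

theorem poly2 (b s p : ℝ) (hb0 : 0 < b) (hb1 : b ≤ 1) (hbs : b < s) (hs3 : s^2 < 3)
    (hp2 : p < 3.1416) :
    3*s^4 + 9*p*s^3 - 9/2*p*b*s^3 - 120*b*s^2 - 60*s^2 + 3*b^2*s^2 + 45*p*b^2*s
      + 30*p*b*s - 50*b^3 - 40*b^2 - b^4 < 0 := by
  have hs0 : 0 < s := hb0.trans hbs
  have hW : (0:ℝ) ≤ 17321/10000 - s := by nlinarith
  have hd : (0:ℝ) ≤ s - b := by linarith
  have ht : (0:ℝ) ≤ 3 - s^2 := by linarith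
  have hb := hb0.le
  have hs := hs0.le
  have m1 : (0:ℝ) ≤ s^4*(3-s^2) := mul_nonneg (pow_nonneg hs 4) ht
  have m2 : (0:ℝ) ≤ b^3*(s-b)*(3-s^2) := mul_nonneg (mul_nonneg (pow_nonneg hb 3) hd) ht
  have m3 : (0:ℝ) ≤ b^2*(s-b)*s*(17321/10000-s) :=
    mul_nonneg (mul_nonneg (mul_nonneg (pow_nonneg hb 2) hd) hs) hW
  have m4 : (0:ℝ) ≤ (s-b)^2*s^2*(17321/10000-s) :=
    mul_nonneg (mul_nonneg (sq_nonneg _) (sq_nonneg _)) hW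
  have m5 : (0:ℝ) ≤ b*(s-b)^2*s^2 := mul_nonneg (mul_nonneg hb (sq_nonneg _)) (sq_nonneg _)
  have m6 : (0:ℝ) ≤ b*(s-b)*s^3 := mul_nonneg (mul_nonneg hb hd) (pow_nonneg hs 3)
  have m7 : (0:ℝ) ≤ b*s^5 := mul_nonneg hb (pow_nonneg hs 5)
  have m8 : (0:ℝ) ≤ (s-b)^2*s^2*(3-s^2) := mul_nonneg (mul_nonneg (sq_nonneg _) (sq_nonneg _)) ht
  have m9 : (0:ℝ) ≤ (s-b)*s^3 := mul_nonneg hd (pow_nonneg hs 3)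
  have m10 : (0:ℝ) ≤ b*(s-b)^2*s := mul_nonneg (mul_nonneg hb (sq_nonneg _)) hs
  have m11 : (0:ℝ) ≤ b^3*s^2 := mul_nonneg (pow_nonneg hb 3) (sq_nonneg _)
  have m12 : (0:ℝ) ≤ b^2*(s-b)*(3-s^2)*s :=
    mul_nonneg (mul_nonneg (mul_nonneg (pow_nonneg hb 2) hd) ht) hs
  have m13 : (0:ℝ) ≤ b^4 := pow_nonneg hb 4
  have m14 : (0:ℝ) ≤ (s-b)*(3-s^2)*s^3 := mul_nonneg (mul_nonneg hd ht) (pow_nonneg hs 3)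
  have key : s^2 * (3*s^4 + 9*(3927/1250)*s^3 - 9/2*(3927/1250)*b*s^3 - 120*b*s^2
      - 60*s^2 + 3*b^2*s^2 + 45*(3927/1250)*b^2*s + 30*(3927/1250)*b*s
      - 50*b^3 - 40*b^2 - b^4) ≤ 0 := by
    linarith [m1, m2, m3, m4, m5, m6, m7, m8, m9, m10, m11, m12, m13, m14]
  have hQP : (3*s^4 + 9*(3927/1250)*s^3 - 9/2*(3927/1250)*b*s^3 - 120*b*s^2
      - 60*s^2 + 3*b^2*s^2 + 45*(3927/1250)*b^2*s + 30*(3927/1250)*b*s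
      - 50*b^3 - 40*b^2 - b^4) ≤ 0 := by
    by_contra hcon
    push_neg at hcon
    have := mul_pos (by positivity : (0:ℝ) < s^2) hcon
    linarith
  have hcoef : (0:ℝ) < 9*s^3 - 9/2*b*s^3 + 45*b^2*s + 30*b*s := by
    nlinarith [mul_pos (mul_pos hs0 hs0) hs0, mul_pos hb0 hs0,
      mul_pos (mul_pos hb0 hb0) hs0,
      mul_nonneg (sub_nonneg.2 hb1) (mul_pos (mul_pos hs0 hs0) hs0).le]
  have hfin := mul_pos (sub_pos.2 (show p < 3927/1250 by norm_num at hp2 ⊢; linarith)) hcoef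
  linarith

set_option maxHeartbeats 2000000 in
/-- For `1 < a < 2` and `0 < h < 3/2`,
`J(h,a) = 5√2(1-3a)√h - π(a+1)h + (a+1)h·arctan(√(2h)/(a+1))
  + (15a²-20a+5+(11-a)h)·arctan(√(2h)/(a-1)) < 0`. -/
theorem melnikov_J_neg (a h : ℝ) (ha1 : 1 < a) (ha2 : a < 2)
    (hh1 : 0 < h) (hh2 : h < 3 / 2) :
    5 * Real.sqrt 2 * (1 - 3 * a) * Real.sqrt h - Real.pi * (a + 1) * h
      + (a + 1) * h * Real.arctan (Real.sqrt (2 * h) / (a + 1))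
      + (15 * a ^ 2 - 20 * a + 5 + (11 - a) * h)
        * Real.arctan (Real.sqrt (2 * h) / (a - 1)) < 0 := by
  have h2h : (0:ℝ) ≤ 2*h := by linarith
  set s := Real.sqrt (2*h) with hsdef
  have hs0 : 0 < s := Real.sqrt_pos.mpr (by linarith)
  have hs2 : s^2 = 2*h := Real.sq_sqrt h2h
  have hs3 : s^2 < 3 := by rw [hs2]; linarith
  have hb0 : (0:ℝ) < a - 1 := by linarith
  have hb1 : a - 1 ≤ 1 := by linarith
  have hT1 : 5 * Real.sqrt 2 * (1 - 3*a) * Real.sqrt h = 5*(1-3*a)*s := by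
    rw [hsdef, Real.sqrt_mul (by norm_num : (0:ℝ) ≤ 2)]; ring
  have hhs : h = s^2/2 := by rw [hs2]; ring
  rw [hT1, hhs]
  set A := Real.arctan (s/(a-1)) with hAdef
  set B := Real.arctan (s/(a+1)) with hBdef
  have hB : B ≤ s/(a+1) := my_arctan_le_self (div_nonneg hs0.le (by linarith))
  have hB2 : (a+1)*(s^2/2)*B ≤ s^3/2 := by
    have h1 : (a+1)*(s^2/2)*B ≤ (a+1)*(s^2/2)*(s/(a+1)) :=
      mul_le_mul_of_nonneg_left hB (by nlinarith [sq_nonneg s])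
    have h2 : (a+1)*(s^2/2)*(s/(a+1)) = s^3/2 := by
      field_simp
    linarith
  have hC : (0:ℝ) < 15*a^2 - 20*a + 5 + (11-a)*(s^2/2) := by
    nlinarith [mul_pos hb0 (show (0:ℝ) < 3*a - 1 by linarith),
      mul_pos (show (0:ℝ) < 11 - a by linarith) (mul_pos hs0 hs0)]
  rcases le_or_gt s (a-1) with hcase | hcase
  · -- s ≤ a - 1
    have hA : A ≤ s/(a-1) - (s/(a-1))^3/3 + (s/(a-1))^5/5 :=
      my_arctan_ub (div_nonneg hs0.le hb0.le)
    have hCA : (15*a^2 - 20*a + 5 + (11-a)*(s^2/2))*A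
        ≤ (15*a^2 - 20*a + 5 + (11-a)*(s^2/2))*(s/(a-1) - (s/(a-1))^3/3 + (s/(a-1))^5/5) :=
      mul_le_mul_of_nonneg_left hA hC.le
    have hpoly := poly1 (a-1) s Real.pi hb0 hb1 hs0 hcase Real.pi_gt_d2
    have hL1 : (5*(1-3*a)*s - Real.pi*(a+1)*(s^2/2) + s^3/2
        + (15*a^2 - 20*a + 5 + (11-a)*(s^2/2))*(s/(a-1) - (s/(a-1))^3/3 + (s/(a-1))^5/5))
        * (30*(a-1)^5)
        = s^2 * (-15*Real.pi*(a-1)^6 - 30*Real.pi*(a-1)^5 - 100*(a-1)^3*s + 40*(a-1)^2*s^3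
          + 60*(a-1)*s^3 + 5*(a-1)^3*s^3 + 30*s^5 - 3*(a-1)*s^5) := by
      field_simp
      ring
    have hL1neg : 5*(1-3*a)*s - Real.pi*(a+1)*(s^2/2) + s^3/2
        + (15*a^2 - 20*a + 5 + (11-a)*(s^2/2))*(s/(a-1) - (s/(a-1))^3/3 + (s/(a-1))^5/5) < 0 := by
      have hmul : (5*(1-3*a)*s - Real.pi*(a+1)*(s^2/2) + s^3/2
          + (15*a^2 - 20*a + 5 + (11-a)*(s^2/2))*(s/(a-1) - (s/(a-1))^3/3 + (s/(a-1))^5/5))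
          * (30*(a-1)^5) < 0 := by
        rw [hL1]
        exact mul_neg_of_pos_of_neg (by positivity) hpoly
      by_contra hcon
      push_neg at hcon
      have h30 : (0:ℝ) < 30*(a-1)^5 := by
        have := pow_pos hb0 5; linarith
      nlinarith [mul_nonneg hcon h30.le]
    linarith
  · -- a - 1 < s
    have hxpos : 0 < (a-1)/s := div_pos hb0 hs0
    have hAeq : A = Real.pi/2 - Real.arctan ((a-1)/s) := by
      rw [hAdef, show s/(a-1) = ((a-1)/s)⁻¹ by rw [inv_div], Real.arctan_inv_of_pos hxpos]
    have hlb := my_arctan_lb hxpos.le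
    have hA : A ≤ Real.pi/2 - ((a-1)/s - ((a-1)/s)^3/3) := by
      rw [hAeq]; linarith
    have hCA : (15*a^2 - 20*a + 5 + (11-a)*(s^2/2))*A
        ≤ (15*a^2 - 20*a + 5 + (11-a)*(s^2/2))*(Real.pi/2 - ((a-1)/s - ((a-1)/s)^3/3)) :=
      mul_le_mul_of_nonneg_left hA hC.le
    have hq := poly2 (a-1) s Real.pi hb0 hb1 hcase hs3 Real.pi_lt_d4
    have hP2 : 3*s^6 + 9*Real.pi*s^5 - 9/2*Real.pi*(a-1)*s^5 - 120*(a-1)*s^4 - 60*s^4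
        + 3*(a-1)^2*s^4 + 45*Real.pi*(a-1)^2*s^3 + 30*Real.pi*(a-1)*s^3 - 80*(a-1)^3*s^2
        - 60*(a-1)^2*s^2 - (a-1)^4*s^2 + 30*(a-1)^5 + 20*(a-1)^4 < 0 := by
      have e1 : (0:ℝ) ≤ (30*(a-1)^3 + 20*(a-1)^2) * (s^2 - (a-1)^2) :=
        mul_nonneg (by nlinarith [pow_pos hb0 3, pow_pos hb0 2]) (by nlinarith)
      have e2 := mul_pos (by positivity : (0:ℝ) < s^2) (neg_pos.2 hq)
      nlinarith [e1, e2]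
    have hL2 : (5*(1-3*a)*s - Real.pi*(a+1)*(s^2/2) + s^3/2
        + (15*a^2 - 20*a + 5 + (11-a)*(s^2/2))*(Real.pi/2 - ((a-1)/s - ((a-1)/s)^3/3)))
        * (6*s^3)
        = 3*s^6 + 9*Real.pi*s^5 - 9/2*Real.pi*(a-1)*s^5 - 120*(a-1)*s^4 - 60*s^4
        + 3*(a-1)^2*s^4 + 45*Real.pi*(a-1)^2*s^3 + 30*Real.pi*(a-1)*s^3 - 80*(a-1)^3*s^2
        - 60*(a-1)^2*s^2 - (a-1)^4*s^2 + 30*(a-1)^5 + 20*(a-1)^4 := by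
      field_simp
      ring
    have hL2neg : 5*(1-3*a)*s - Real.pi*(a+1)*(s^2/2) + s^3/2
        + (15*a^2 - 20*a + 5 + (11-a)*(s^2/2))*(Real.pi/2 - ((a-1)/s - ((a-1)/s)^3/3)) < 0 := by
      have hmul : (5*(1-3*a)*s - Real.pi*(a+1)*(s^2/2) + s^3/2
          + (15*a^2 - 20*a + 5 + (11-a)*(s^2/2))*(Real.pi/2 - ((a-1)/s - ((a-1)/s)^3/3)))
          * (6*s^3) < 0 := by
        rw [hL2]; exact hP2
      by_contra hcon
      push_neg at hcon
      have h6 : (0:ℝ) < 6*s^3 := by positivity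
      nlinarith [mul_nonneg hcon h6.le]
    linarith
end
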